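/- Let c¹, c² ∈ ℕ₊ⁿ define a BUCO instance and let (H, c1, c2) be the associated MSp instance. If x ∈ {0,1}ⁿ is a Pareto-optimal solution of the BUCO instance, then S_x is a Pareto-optimal solution of the MSp instance; that is, there is no spanner S of H whose value vector f(S) dominates f(S_x). -/

import Mathlib

namespace MSpPaper

open SimpleGraph

variable {V : Type*}

/-- Minimum total `c2`-weight of a walk from `u` to `v` using only edges in `F`
(the set of weights of such walks is a set of naturals; its infimum is `0` when no walk exists). -/
noncomputable def wdist (F : Set (Sym2 V)) (c2 : Sym2 V → ℕ) (u v : V) : ℕ :=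
  sInf (Set.range fun p : (SimpleGraph.fromEdgeSet F).Walk u v => (p.edges.map c2).sum)

/-- `S` is a spanner of `G`: a subset of the edges such that the resulting subgraph is connected. -/
def IsSpanner (G : SimpleGraph V) (S : Set (Sym2 V)) : Prop :=
  S ⊆ G.edgeSet ∧ (SimpleGraph.fromEdgeSet S).Connected

/-- First objective: total `c1`-cost of the spanner. -/
def f1 (c1 : Sym2 V → ℤ) (S : Finset (Sym2 V)) : ℤ := ∑ e ∈ S, c1 e

open scoped Classical in
/-- Second objective (stretch factor): maximum over pairs of distinct vertices of the
distance ratio `d^S(u,v)/d^E(u,v)` (junk value `0` if there is no pair of distinct vertices). -/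
noncomputable def f2 [Fintype V] (E S : Set (Sym2 V)) (c2 : Sym2 V → ℕ) : ℚ :=
  if h : ((Finset.univ : Finset (V × V)).filter fun p => p.1 ≠ p.2).Nonempty then
    ((Finset.univ : Finset (V × V)).filter fun p => p.1 ≠ p.2).sup' h
      (fun p => (wdist S c2 p.1 p.2 : ℚ) / (wdist E c2 p.1 p.2 : ℚ))
  else 0

/-- The value vector of a spanner. -/
noncomputable def valueVec [Fintype V] (G : SimpleGraph V) (c1 : Sym2 V → ℤ) (c2 : Sym2 V → ℕ)
    (S : Finset (Sym2 V)) : ℚ × ℚ :=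
  ((f1 c1 S : ℚ), f2 G.edgeSet (↑S) c2)

/-- `y'` dominates `y`: componentwise `≤` and unequal. -/
def Dominates (y' y : ℚ × ℚ) : Prop := y' ≤ y ∧ y' ≠ y

/-- The non-dominated set of an MSp instance. -/
def YN [Fintype V] (G : SimpleGraph V) (c1 : Sym2 V → ℤ) (c2 : Sym2 V → ℕ) : Set (ℚ × ℚ) :=
  {y | (∃ S : Finset (Sym2 V), IsSpanner G (↑S) ∧ valueVec G c1 c2 S = y) ∧
       ∀ S' : Finset (Sym2 V), IsSpanner G (↑S') → ¬ Dominates (valueVec G c1 c2 S') y}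


/-! ### The MSp instance associated with a BUCO instance (Section 4)

A BUCO instance is given by vectors `a = c¹` and `b = c²` in `ℕ₊ⁿ`; feasible
solutions are `x : Fin n → Bool` (`x i = true` meaning `x_i = 1`). -/

/-- Vertices of the graph `H`: for each `i`, the vertex `(i,0)` is `v_i`, `(i,1)` is `v_i'`,
and `(i,2)` is `w_i`. -/
abbrev Vtx (n : ℕ) := Fin n × Fin 3

/-- The weights `(c1, c2)` of the (ordered) pair `x y` of vertices of `H`;
`(0, 0)` (in particular `c2 = 0`) marks non-edges.
Here `M = (∑ i, a i) + 1`. -/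
def wtB (n : ℕ) (a b : Fin n → ℕ) (x y : Vtx n) : ℤ × ℕ :=
  if x.2 = 0 ∧ y.2 = 2 ∧ x.1 = y.1 then (0, b x.1 + 2)
  else if x.2 = 0 ∧ y.2 = 1 ∧ x.1 = y.1 then (0, 1)
  else if x.2 = 1 ∧ y.2 = 2 ∧ x.1 = y.1 then ((a x.1 : ℤ), 1)
  else if x.2 = 2 ∧ y.2 = 0 ∧ (y.1 : ℕ) = (x.1 : ℕ) + 1 then (0, 1)
  else if x.2 = 0 ∧ y.2 = 2 ∧ (x.1 : ℕ) = 0 ∧ (y.1 : ℕ) = n - 1 ∧ x.1 ≠ y.1 then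
    (((∑ i, a i : ℕ) : ℤ) + 1, 1)
  else (0, 0)

/-- The cost function `c1` of `H`. -/
def c1B (n : ℕ) (a b : Fin n → ℕ) : Sym2 (Vtx n) → ℤ :=
  Sym2.lift ⟨fun x y => (wtB n a b x y).1 + (wtB n a b y x).1, fun _ _ => add_comm _ _⟩

/-- The length function `c2` of `H`. -/
def c2B (n : ℕ) (a b : Fin n → ℕ) : Sym2 (Vtx n) → ℕ :=
  Sym2.lift ⟨fun x y => (wtB n a b x y).2 + (wtB n a b y x).2, fun _ _ => add_comm _ _⟩

/-- The edge set of `H`: exactly the pairs with positive length. -/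
def EB (n : ℕ) (a b : Fin n → ℕ) : Set (Sym2 (Vtx n)) := {e | c2B n a b e ≠ 0}

/-- The graph `H` associated with the BUCO instance `(a, b)`. -/
def HB (n : ℕ) (a b : Fin n → ℕ) : SimpleGraph (Vtx n) :=
  SimpleGraph.fromEdgeSet (EB n a b)

/-- The vertex `v_i`. -/
def vB (n : ℕ) (i : Fin n) : Vtx n := (i, 0)
/-- The vertex `v_i'`. -/
def pB (n : ℕ) (i : Fin n) : Vtx n := (i, 1)
/-- The vertex `w_i`. -/
def wB (n : ℕ) (i : Fin n) : Vtx n := (i, 2)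
/-- The vertex `s = v_1`. -/
def sB (n : ℕ) (hn : 0 < n) : Vtx n := (⟨0, hn⟩, 0)
/-- The vertex `t = w_n`. -/
def tB (n : ℕ) (hn : 0 < n) : Vtx n := (⟨n - 1, Nat.sub_lt hn one_pos⟩, 2)

open scoped Classical in
/-- The spanner `S_x` of `H` associated with a BUCO solution `x`: all edges of zero
`c1`-cost together with the edges `{v_i', w_i}` for every `i` with `x_i = 0`. -/
noncomputable def Sx (n : ℕ) (a b : Fin n → ℕ) (x : Fin n → Bool) : Finset (Sym2 (Vtx n)) :=
  (Finset.univ.filter fun e => e ∈ (HB n a b).edgeSet ∧ c1B n a b e = 0) ∪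
    (Finset.univ.filter fun i : Fin n => x i = false).image fun i => s(pB n i, wB n i)

/-- The value vector `(-c¹ᵀx, c²ᵀx)` of a BUCO solution `x`, as a vector in `ℚ²`. -/
def bucoVal (n : ℕ) (a b : Fin n → ℕ) (x : Fin n → Bool) : ℚ × ℚ :=
  (-(∑ i, if x i then (a i : ℚ) else 0), ∑ i, if x i then (b i : ℚ) else 0)


section Generic
variable {V : Type*}

lemma wdist_le_sum (F : Set (Sym2 V)) (c2 : Sym2 V → ℕ) {u v : V}
    (p : (SimpleGraph.fromEdgeSet F).Walk u v) :
    wdist F c2 u v ≤ (p.edges.map c2).sum :=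
  Nat.sInf_le ⟨p, rfl⟩

lemma wdist_exists (F : Set (Sym2 V)) (c2 : Sym2 V → ℕ) {u v : V}
    (h : Nonempty ((SimpleGraph.fromEdgeSet F).Walk u v)) :
    ∃ p : (SimpleGraph.fromEdgeSet F).Walk u v, (p.edges.map c2).sum = wdist F c2 u v := by
  have : (Set.range fun p : (SimpleGraph.fromEdgeSet F).Walk u v => (p.edges.map c2).sum).Nonempty :=
    Set.range_nonempty _
  exact Nat.sInf_mem this

lemma wdist_empty (F : Set (Sym2 V)) (c2 : Sym2 V → ℕ) {u v : V}
    (h : IsEmpty ((SimpleGraph.fromEdgeSet F).Walk u v)) :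
    wdist F c2 u v = 0 := by
  unfold wdist
  rw [Set.range_eq_empty]
  exact Nat.sInf_empty

lemma sum_ge_potential (F : Set (Sym2 V)) (c2 : Sym2 V → ℕ) (φ : V → ℤ)
    (hφ : ∀ u v, (SimpleGraph.fromEdgeSet F).Adj u v → φ v - φ u ≤ c2 s(u, v)) :
    ∀ {u v : V} (p : (SimpleGraph.fromEdgeSet F).Walk u v),
      φ v - φ u ≤ ((p.edges.map c2).sum : ℤ) := by
  intro u v p
  induction p with
  | nil => simp
  | cons h q ih =>
    rename_i u w v
    have h1 := hφ u w h
    simp only [Walk.edges_cons, List.map_cons, List.sum_cons, Nat.cast_add]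
    omega

lemma wdist_ge_potential (F : Set (Sym2 V)) (c2 : Sym2 V → ℕ) (φ : V → ℤ)
    (hφ : ∀ u v, (SimpleGraph.fromEdgeSet F).Adj u v → φ v - φ u ≤ c2 s(u, v))
    {u v : V} (h : Nonempty ((SimpleGraph.fromEdgeSet F).Walk u v)) :
    φ v - φ u ≤ (wdist F c2 u v : ℤ) := by
  obtain ⟨p, hp⟩ := wdist_exists F c2 h
  rw [← hp]
  exact sum_ge_potential F c2 φ hφ p

lemma walk_transfer {F F' : Set (Sym2 V)} (hFF : F ⊆ F') (c2 : Sym2 V → ℕ) {u v : V}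
    (p : (SimpleGraph.fromEdgeSet F).Walk u v) :
    ∃ q : (SimpleGraph.fromEdgeSet F').Walk u v,
      (q.edges.map c2).sum = (p.edges.map c2).sum := by
  induction p with
  | nil => exact ⟨Walk.nil, rfl⟩
  | cons h q ih =>
    rename_i u w v
    obtain ⟨q', hq'⟩ := ih
    rw [fromEdgeSet_adj] at h
    refine ⟨Walk.cons (by rw [fromEdgeSet_adj]; exact ⟨hFF h.1, h.2⟩) q', ?_⟩
    simp [hq']

lemma walk_sum_one_le (F : Set (Sym2 V)) (c2 : Sym2 V → ℕ)
    (hF : ∀ e ∈ F, c2 e ≠ 0) {u v : V} (huv : u ≠ v)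
    (p : (SimpleGraph.fromEdgeSet F).Walk u v) :
    1 ≤ (p.edges.map c2).sum := by
  cases p with
  | nil => exact absurd rfl huv
  | cons h q =>
    rename_i w
    rw [fromEdgeSet_adj] at h
    have := hF _ h.1
    simp only [Walk.edges_cons, List.map_cons, List.sum_cons]
    omega

lemma wdist_ge_one (F : Set (Sym2 V)) (c2 : Sym2 V → ℕ)
    (hF : ∀ e ∈ F, c2 e ≠ 0) {u v : V} (huv : u ≠ v)
    (h : Nonempty ((SimpleGraph.fromEdgeSet F).Walk u v)) :
    1 ≤ wdist F c2 u v := by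
  obtain ⟨p, hp⟩ := wdist_exists F c2 h
  rw [← hp]; exact walk_sum_one_le F c2 hF huv p

lemma wdist_self (F : Set (Sym2 V)) (c2 : Sym2 V → ℕ) (u : V) : wdist F c2 u u = 0 :=
  Nat.le_zero.mp (by simpa using wdist_le_sum F c2 (Walk.nil' u))

lemma replacement (F F' : Set (Sym2 V)) (c2 : Sym2 V → ℕ) (K : ℚ)
    (hrep : ∀ u v, (SimpleGraph.fromEdgeSet F').Adj u v →
      ∃ q : (SimpleGraph.fromEdgeSet F).Walk u v,
        ((q.edges.map c2).sum : ℚ) ≤ K * c2 s(u, v)) :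
    ∀ {u v : V} (p : (SimpleGraph.fromEdgeSet F').Walk u v),
      ∃ q : (SimpleGraph.fromEdgeSet F).Walk u v,
        ((q.edges.map c2).sum : ℚ) ≤ K * ((p.edges.map c2).sum : ℚ) := by
  intro u v p
  induction p with
  | nil => exact ⟨Walk.nil, by simp⟩
  | cons h q ih =>
    rename_i u w v
    obtain ⟨q1, hq1⟩ := hrep u w h
    obtain ⟨q2, hq2⟩ := ih
    refine ⟨q1.append q2, ?_⟩
    rw [Walk.edges_append, List.map_append, List.sum_append]
    simp only [Walk.edges_cons, List.map_cons, List.sum_cons, Nat.cast_add, mul_add]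
    exact add_le_add hq1 hq2

lemma f2_le [Fintype V] (E S : Set (Sym2 V)) (c2 : Sym2 V → ℕ) (K : ℚ) (hK : 0 ≤ K)
    (hSE : S ⊆ E)
    (hrep : ∀ u v, (SimpleGraph.fromEdgeSet E).Adj u v →
      ∃ q : (SimpleGraph.fromEdgeSet S).Walk u v,
        ((q.edges.map c2).sum : ℚ) ≤ K * c2 s(u, v)) :
    f2 E S c2 ≤ K := by
  classical
  unfold f2
  split_ifs with h
  · apply Finset.sup'_le
    intro p _
    obtain ⟨u, v⟩ := p
    simp only
    by_cases hne : Nonempty ((SimpleGraph.fromEdgeSet E).Walk u v)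
    · obtain ⟨pe, hpe⟩ := wdist_exists E c2 hne
      obtain ⟨q, hq⟩ := replacement S E c2 K hrep pe
      have hds : (wdist S c2 u v : ℚ) ≤ K * (wdist E c2 u v : ℚ) := by
        calc (wdist S c2 u v : ℚ) ≤ ((q.edges.map c2).sum : ℚ) := by
              exact_mod_cast wdist_le_sum S c2 q
          _ ≤ K * ((pe.edges.map c2).sum : ℚ) := hq
          _ = K * (wdist E c2 u v : ℚ) := by rw [hpe]
      rcases Nat.eq_zero_or_pos (wdist E c2 u v) with h0 | hpos
      · have : (wdist S c2 u v : ℚ) ≤ 0 := by rw [h0] at hds; simpa using hds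
        have : (wdist S c2 u v : ℚ) = 0 := le_antisymm this (by positivity)
        rw [this, zero_div]; exact hK
      · rw [div_le_iff₀ (by exact_mod_cast hpos)]
        exact hds
    · have hse : IsEmpty ((SimpleGraph.fromEdgeSet S).Walk u v) := by
        by_contra hcon
        rw [not_isEmpty_iff] at hcon
        obtain ⟨ps⟩ := hcon
        obtain ⟨q, _⟩ := walk_transfer hSE c2 ps
        exact hne ⟨q⟩
      rw [wdist_empty S c2 hse]
      simpa using hK
  · exact hK

lemma f2_ge [Fintype V] (E S : Set (Sym2 V)) (c2 : Sym2 V → ℕ) {u v : V} (huv : u ≠ v) :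
    (wdist S c2 u v : ℚ) / (wdist E c2 u v : ℚ) ≤ f2 E S c2 := by
  classical
  unfold f2
  have hmem : (u, v) ∈ (Finset.univ : Finset (V × V)).filter fun p => p.1 ≠ p.2 := by
    simp [huv]
  rw [dif_pos ⟨_, hmem⟩]
  exact Finset.le_sup' (fun p : V × V => (wdist S c2 p.1 p.2 : ℚ) / (wdist E c2 p.1 p.2 : ℚ)) hmem


end Generic

section Specific

variable (n : ℕ) (a b : Fin n → ℕ)

lemma c1B_mk (u v : Vtx n) : c1B n a b s(u,v) = (wtB n a b u v).1 + (wtB n a b v u).1 := rfl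
lemma c2B_mk (u v : Vtx n) : c2B n a b s(u,v) = (wtB n a b u v).2 + (wtB n a b v u).2 := rfl

lemma wtB_fst_nonneg (u v : Vtx n) : 0 ≤ (wtB n a b u v).1 := by
  unfold wtB; split_ifs <;> simp <;> positivity

lemma c1B_nonneg (e : Sym2 (Vtx n)) : 0 ≤ c1B n a b e := by
  induction e using Sym2.ind with
  | _ u v => rw [c1B_mk]; have := wtB_fst_nonneg n a b u v; have := wtB_fst_nonneg n a b v u; omega

-- evaluation lemmas
lemma wt_vw (i : Fin n) : wtB n a b (vB n i) (wB n i) = (0, b i + 2) := by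
  simp [wtB, vB, wB]
lemma wt_wv (i : Fin n) : wtB n a b (wB n i) (vB n i) = (0, 0) := by
  simp [wtB, vB, wB]
lemma wt_vp (i : Fin n) : wtB n a b (vB n i) (pB n i) = (0, 1) := by
  simp [wtB, vB, pB]
lemma wt_pv (i : Fin n) : wtB n a b (pB n i) (vB n i) = (0, 0) := by
  simp [wtB, vB, pB]
lemma wt_pw (i : Fin n) : wtB n a b (pB n i) (wB n i) = ((a i : ℤ), 1) := by
  simp [wtB, pB, wB]
lemma wt_wp (i : Fin n) : wtB n a b (wB n i) (pB n i) = (0, 0) := by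
  simp [wtB, pB, wB]
lemma wt_wv' (i j : Fin n) (h : (j : ℕ) = (i : ℕ) + 1) :
    wtB n a b (wB n i) (vB n j) = (0, 1) := by
  simp [wtB, vB, wB, h]
lemma wt_vw' (i j : Fin n) (h : (j : ℕ) = (i : ℕ) + 1) :
    wtB n a b (vB n j) (wB n i) = (0, 0) := by
  have hj := j.isLt
  simp [wtB, vB, wB, Fin.ext_iff, h]

lemma c2_vw (i : Fin n) : c2B n a b s(vB n i, wB n i) = b i + 2 := by
  rw [c2B_mk, wt_vw, wt_wv]; rfl
lemma c1_vw (i : Fin n) : c1B n a b s(vB n i, wB n i) = 0 := by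
  rw [c1B_mk, wt_vw, wt_wv]; rfl
lemma c2_vp (i : Fin n) : c2B n a b s(vB n i, pB n i) = 1 := by
  rw [c2B_mk, wt_vp, wt_pv]; rfl
lemma c1_vp (i : Fin n) : c1B n a b s(vB n i, pB n i) = 0 := by
  rw [c1B_mk, wt_vp, wt_pv]; rfl
lemma c2_pw (i : Fin n) : c2B n a b s(pB n i, wB n i) = 1 := by
  rw [c2B_mk, wt_pw, wt_wp]; rfl
lemma c1_pw (i : Fin n) : c1B n a b s(pB n i, wB n i) = (a i : ℤ) := by
  rw [c1B_mk, wt_pw, wt_wp]; ring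
lemma c2_wv (i j : Fin n) (h : (j : ℕ) = (i : ℕ) + 1) : c2B n a b s(wB n i, vB n j) = 1 := by
  rw [c2B_mk, wt_wv' n a b i j h, wt_vw' n a b i j h]; rfl
lemma c1_wv (i j : Fin n) (h : (j : ℕ) = (i : ℕ) + 1) : c1B n a b s(wB n i, vB n j) = 0 := by
  rw [c1B_mk, wt_wv' n a b i j h, wt_vw' n a b i j h]; rfl

lemma wt_st (hn : 0 < n) (h2 : 2 ≤ n) :
    wtB n a b (sB n hn) (tB n hn) = (((∑ i, a i : ℕ) : ℤ) + 1, 1) := by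
  have h0 : ¬ ((0:ℕ) = n - 1) := by omega
  simp [wtB, sB, tB, Fin.ext_iff, h0]
lemma wt_ts (hn : 0 < n) (h2 : 2 ≤ n) :
    wtB n a b (tB n hn) (sB n hn) = (0, 0) := by
  simp [wtB, sB, tB, Fin.ext_iff]
lemma c2_st (hn : 0 < n) (h2 : 2 ≤ n) : c2B n a b s(sB n hn, tB n hn) = 1 := by
  rw [c2B_mk, wt_st n a b hn h2, wt_ts n a b hn h2]; rfl
lemma c1_st (hn : 0 < n) (h2 : 2 ≤ n) :
    c1B n a b s(sB n hn, tB n hn) = ((∑ i, a i : ℕ) : ℤ) + 1 := by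
  rw [c1B_mk, wt_st n a b hn h2, wt_ts n a b hn h2]; ring

lemma wt_snd_cases (u v : Vtx n) (h : (wtB n a b u v).2 ≠ 0) :
    (∃ i, u = vB n i ∧ v = wB n i) ∨ (∃ i, u = vB n i ∧ v = pB n i) ∨
    (∃ i, u = pB n i ∧ v = wB n i) ∨
    (∃ i j : Fin n, (j : ℕ) = (i : ℕ) + 1 ∧ u = wB n i ∧ v = vB n j) ∨
    (2 ≤ n ∧ (u.1 : ℕ) = 0 ∧ (v.1 : ℕ) = n - 1 ∧ u.2 = 0 ∧ v.2 = 2) := by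
  obtain ⟨i, ju⟩ := u
  obtain ⟨k, jv⟩ := v
  unfold wtB at h
  split_ifs at h with h1 h2 h3 h4 h5
  · obtain ⟨e1, e2, e3⟩ := h1; left
    exact ⟨i, Prod.ext rfl e1, Prod.ext e3.symm e2⟩
  · obtain ⟨e1, e2, e3⟩ := h2; right; left
    exact ⟨i, Prod.ext rfl e1, Prod.ext e3.symm e2⟩
  · obtain ⟨e1, e2, e3⟩ := h3; right; right; left
    exact ⟨i, Prod.ext rfl e1, Prod.ext e3.symm e2⟩
  · obtain ⟨e1, e2, e3⟩ := h4; right; right; right; left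
    exact ⟨i, k, e3, Prod.ext rfl e1, Prod.ext rfl e2⟩
  · obtain ⟨e1, e2, e3, e4, e5⟩ := h5; right; right; right; right
    refine ⟨?_, e3, e4, e1, e2⟩
    simp only at e3 e4 e5
    have : (i : ℕ) ≠ (k : ℕ) := fun hc => e5 (Fin.ext hc)
    omega
  · simp at h


end Specific

section SpecificA
variable (n : ℕ) (a b : Fin n → ℕ) (x : Fin n → Bool)

lemma wtB_snd_diag (u : Vtx n) : (wtB n a b u u).2 = 0 := by
  unfold wtB
  split_ifs with h1 h2 h3 h4 h5
  · exact absurd (h1.1 ▸ h1.2.1) (by decide)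
  · exact absurd (h2.1 ▸ h2.2.1) (by decide)
  · exact absurd (h3.1 ▸ h3.2.1) (by decide)
  · exact absurd (h4.1 ▸ h4.2.1) (by decide)
  · exact absurd rfl h5.2.2.2.2
  · rfl

lemma EB_not_diag (u : Vtx n) : s(u, u) ∉ EB n a b := by
  simp [EB, c2B_mk, wtB_snd_diag]

lemma edgeSet_HB : (HB n a b).edgeSet = EB n a b := by
  rw [HB, edgeSet_fromEdgeSet]
  ext e
  induction e using Sym2.ind with
  | _ u v =>
    constructor
    · exact fun h => h.1
    · intro h
      refine ⟨h, fun hd => ?_⟩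
      have huv : u = v := Sym2.mk_isDiag_iff.mp hd
      subst huv
      exact EB_not_diag n a b u h

lemma vw_mem_EB (i : Fin n) : s(vB n i, wB n i) ∈ EB n a b := by
  simp [EB, c2_vw]
lemma vp_mem_EB (i : Fin n) : s(vB n i, pB n i) ∈ EB n a b := by
  simp [EB, c2_vp]
lemma pw_mem_EB (i : Fin n) : s(pB n i, wB n i) ∈ EB n a b := by
  simp [EB, c2_pw]
lemma wv_mem_EB (i j : Fin n) (h : (j : ℕ) = (i : ℕ) + 1) : s(wB n i, vB n j) ∈ EB n a b := by
  simp [EB, c2_wv n a b i j h]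
lemma st_mem_EB (hn : 0 < n) (h2 : 2 ≤ n) : s(sB n hn, tB n hn) ∈ EB n a b := by
  simp [EB, c2_st n a b hn h2]

lemma EB_cases (u v : Vtx n) (h : s(u, v) ∈ EB n a b) :
    ((∃ i, u = vB n i ∧ v = wB n i) ∨ (∃ i, u = vB n i ∧ v = pB n i) ∨
     (∃ i, u = pB n i ∧ v = wB n i) ∨
     (∃ i j : Fin n, (j : ℕ) = (i : ℕ) + 1 ∧ u = wB n i ∧ v = vB n j) ∨
     (2 ≤ n ∧ (u.1 : ℕ) = 0 ∧ (v.1 : ℕ) = n - 1 ∧ u.2 = 0 ∧ v.2 = 2)) ∨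
    ((∃ i, v = vB n i ∧ u = wB n i) ∨ (∃ i, v = vB n i ∧ u = pB n i) ∨
     (∃ i, v = pB n i ∧ u = wB n i) ∨
     (∃ i j : Fin n, (j : ℕ) = (i : ℕ) + 1 ∧ v = wB n i ∧ u = vB n j) ∨
     (2 ≤ n ∧ (v.1 : ℕ) = 0 ∧ (u.1 : ℕ) = n - 1 ∧ v.2 = 0 ∧ u.2 = 2)) := by
  simp only [EB, Set.mem_setOf_eq, c2B_mk] at h
  rcases Nat.eq_zero_or_pos (wtB n a b u v).2 with h0 | hpos
  · right
    exact wt_snd_cases n a b v u (by omega)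
  · left
    exact wt_snd_cases n a b u v (by omega)

lemma pw_inj {i j : Fin n} (h : s(pB n i, wB n i) = s(pB n j, wB n j)) : i = j := by
  rw [Sym2.eq_iff] at h
  rcases h with ⟨h1, _⟩ | ⟨h1, _⟩
  · exact congrArg Prod.fst h1
  · have h2 := congrArg Prod.snd h1; simp [pB, wB] at h2

lemma mem_Sx_zero {e : Sym2 (Vtx n)} (he : e ∈ EB n a b) (hc : c1B n a b e = 0) :
    e ∈ Sx n a b x := by
  classical
  unfold Sx
  rw [Finset.mem_union]
  left
  simp only [Finset.mem_filter, Finset.mem_univ, true_and]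
  rw [edgeSet_HB]
  exact ⟨he, hc⟩

lemma pw_mem_Sx_of_false (i : Fin n) (hxi : x i = false) :
    s(pB n i, wB n i) ∈ Sx n a b x := by
  classical
  unfold Sx
  rw [Finset.mem_union]
  right
  simp only [Finset.mem_image, Finset.mem_filter, Finset.mem_univ, true_and]
  exact ⟨i, hxi, rfl⟩

lemma pw_mem_Sx_iff (ha : ∀ i, 0 < a i) (i : Fin n) :
    s(pB n i, wB n i) ∈ Sx n a b x ↔ x i = false := by
  classical
  constructor
  · intro h
    unfold Sx at h
    rw [Finset.mem_union] at h
    rcases h with h | h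
    · simp only [Finset.mem_filter, Finset.mem_univ, true_and] at h
      rw [c1_pw] at h
      have := ha i
      omega
    · simp only [Finset.mem_image, Finset.mem_filter, Finset.mem_univ, true_and] at h
      obtain ⟨j, hj, hej⟩ := h
      rwa [pw_inj n hej] at hj
  · exact pw_mem_Sx_of_false n a b x i

lemma Sx_subset_EB : ↑(Sx n a b x) ⊆ EB n a b := by
  classical
  intro e he
  unfold Sx at he
  simp only [Finset.coe_union, Set.mem_union, Finset.coe_filter, Finset.coe_image,
    Set.mem_setOf_eq, Set.mem_image] at he
  rcases he with ⟨_, he, _⟩ | ⟨i, _, rfl⟩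
  · rwa [edgeSet_HB] at he
  · exact pw_mem_EB n a b i

lemma f1_Sx (ha : ∀ i, 0 < a i) :
    f1 (c1B n a b) (Sx n a b x) =
      ∑ i ∈ Finset.univ.filter (fun i => x i = false), (a i : ℤ) := by
  classical
  unfold f1 Sx
  rw [Finset.sum_union]
  · have h1 : ∑ e ∈ Finset.univ.filter
        (fun e => e ∈ (HB n a b).edgeSet ∧ c1B n a b e = 0), c1B n a b e = 0 := by
      apply Finset.sum_eq_zero
      intro e he
      exact (Finset.mem_filter.mp he).2.2
    rw [h1, zero_add, Finset.sum_image (fun i _ j _ h => pw_inj n h)]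
    exact Finset.sum_congr rfl fun i _ => c1_pw n a b i
  · rw [Finset.disjoint_right]
    intro e he hmem
    simp only [Finset.mem_image, Finset.mem_filter, Finset.mem_univ, true_and] at he hmem
    obtain ⟨i, hi, rfl⟩ := he
    have h2 := hmem.2
    rw [c1_pw] at h2
    have := ha i
    omega

lemma f1_ge (S : Finset (Sym2 (Vtx n))) :
    ∑ i ∈ Finset.univ.filter (fun i => s(pB n i, wB n i) ∈ S), (a i : ℤ) ≤
      f1 (c1B n a b) S := by
  classical
  have hsub : (Finset.univ.filter (fun i => s(pB n i, wB n i) ∈ S)).image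
      (fun i => s(pB n i, wB n i)) ⊆ S := by
    intro e he
    simp only [Finset.mem_image, Finset.mem_filter, Finset.mem_univ, true_and] at he
    obtain ⟨i, hi, rfl⟩ := he
    exact hi
  calc ∑ i ∈ Finset.univ.filter (fun i => s(pB n i, wB n i) ∈ S), (a i : ℤ)
      = ∑ e ∈ (Finset.univ.filter (fun i => s(pB n i, wB n i) ∈ S)).image
          (fun i => s(pB n i, wB n i)), c1B n a b e := by
        rw [Finset.sum_image (fun i _ j _ h => pw_inj n h)]
        exact Finset.sum_congr rfl fun i _ => (c1_pw n a b i).symm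
    _ ≤ f1 (c1B n a b) S :=
        Finset.sum_le_sum_of_subset_of_nonneg hsub fun e _ _ => c1B_nonneg n a b e

lemma f1_single {S : Finset (Sym2 (Vtx n))} {e : Sym2 (Vtx n)} (hmem : e ∈ S) :
    c1B n a b e ≤ f1 (c1B n a b) S :=
  Finset.single_le_sum (fun e _ => c1B_nonneg n a b e) hmem

end SpecificA

section SpecificB
variable (n : ℕ) (a b : Fin n → ℕ)

/-- gadget cost -/
def gI (b : Fin n → ℕ) (y : Fin n → Bool) (i : Fin n) : ℤ := if y i then (b i : ℤ) + 2 else 2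

/-- prefix sums -/
def PI (b : Fin n → ℕ) (y : Fin n → Bool) (m : ℕ) : ℤ :=
  ∑ i ∈ Finset.univ.filter (fun i : Fin n => (i : ℕ) < m), (gI n b y i + 1)

def phiB (b : Fin n → ℕ) (y : Fin n → Bool) (u : Vtx n) : ℤ :=
  PI n b y (u.1 : ℕ) + (if u.2 = 0 then 0 else if u.2 = 1 then 1 else gI n b y u.1)

variable (y : Fin n → Bool)

lemma gI_ge : ∀ i, 2 ≤ gI n b y i := by
  intro i; unfold gI; split_ifs <;> omega

lemma gI_le : ∀ i, gI n b y i ≤ (b i : ℤ) + 2 := by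
  intro i; unfold gI; split_ifs <;> omega

lemma PI_zero : PI n b y 0 = 0 := by
  unfold PI
  rw [Finset.filter_false_of_mem (fun i _ => by omega), Finset.sum_empty]

lemma PI_step (i : Fin n) : PI n b y ((i : ℕ) + 1) = PI n b y (i : ℕ) + gI n b y i + 1 := by
  unfold PI
  have hins : Finset.univ.filter (fun j : Fin n => (j : ℕ) < (i : ℕ) + 1) =
      insert i (Finset.univ.filter (fun j : Fin n => (j : ℕ) < (i : ℕ))) := by
    ext j
    simp only [Finset.mem_filter, Finset.mem_univ, true_and, Finset.mem_insert, Fin.ext_iff]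
    omega
  rw [hins, Finset.sum_insert (by simp)]
  ring

lemma PI_univ : PI n b y n =
    (2 * n + 1 * n : ℤ) + ∑ i, (if y i then (b i : ℤ) else 0) := by
  unfold PI
  rw [Finset.filter_true_of_mem (fun i _ => i.isLt)]
  have : ∀ i : Fin n, gI n b y i + 1 = (if y i then (b i : ℤ) else 0) + 3 := by
    intro i; unfold gI; split_ifs <;> ring
  rw [Finset.sum_congr rfl (fun i _ => this i), Finset.sum_add_distrib]
  simp [Finset.card_univ, mul_comm]
  ring

lemma phi_v (i : Fin n) : phiB n b y (vB n i) = PI n b y (i : ℕ) := by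
  simp [phiB, vB]
lemma phi_p (i : Fin n) : phiB n b y (pB n i) = PI n b y (i : ℕ) + 1 := by
  simp [phiB, pB]
lemma phi_w (i : Fin n) : phiB n b y (wB n i) = PI n b y (i : ℕ) + gI n b y i := by
  simp [phiB, wB]

lemma lipschitz (hn : 0 < n) (S : Finset (Sym2 (Vtx n)))
    (hS : ↑S ⊆ (HB n a b).edgeSet)
    (hst : 2 ≤ n → s(sB n hn, tB n hn) ∉ S)
    (hpw : ∀ i, s(pB n i, wB n i) ∈ S → y i = false) :
    ∀ u v, (SimpleGraph.fromEdgeSet (↑S : Set (Sym2 (Vtx n)))).Adj u v →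
      phiB n b y v - phiB n b y u ≤ c2B n a b s(u, v) := by
  intro u v hadj
  rw [SimpleGraph.fromEdgeSet_adj] at hadj
  obtain ⟨hmem, hne⟩ := hadj
  have he : s(u, v) ∈ EB n a b := by
    have := hS hmem
    rwa [edgeSet_HB] at this
  have hgge := gI_ge n b y
  have hgle := gI_le n b y
  rcases EB_cases n a b u v he with
    (⟨i, rfl, rfl⟩ | ⟨i, rfl, rfl⟩ | ⟨i, rfl, rfl⟩ | ⟨i, j, hij, rfl, rfl⟩ | ⟨h2, h3, h4, h5, h6⟩) |
    (⟨i, rfl, rfl⟩ | ⟨i, rfl, rfl⟩ | ⟨i, rfl, rfl⟩ | ⟨i, j, hij, rfl, rfl⟩ | ⟨h2, h3, h4, h5, h6⟩)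
  · rw [c2_vw, phi_v, phi_w]
    have := hgle i; push_cast; omega
  · rw [c2_vp, phi_v, phi_p]; omega
  · have hy := hpw i hmem
    rw [c2_pw, phi_p, phi_w]
    unfold gI; rw [hy]; norm_num
  · rw [c2_wv n a b i j hij, phi_w, phi_v, hij, PI_step]
    have := hgge i; omega
  · exfalso
    refine hst h2 ?_
    have hu : u = sB n hn := by
      obtain ⟨u1, u2⟩ := u
      simp only at h3 h5
      exact Prod.ext (Fin.ext (by simpa [sB] using h3)) h5
    have hv : v = tB n hn := by
      obtain ⟨v1, v2⟩ := v
      simp only at h4 h6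
      exact Prod.ext (Fin.ext (by simpa [tB] using h4)) h6
    rw [← hu, ← hv]; exact hmem
  · rw [Sym2.eq_swap, c2_vw, phi_v, phi_w]
    have := hgge i; omega
  · rw [Sym2.eq_swap, c2_vp, phi_v, phi_p]; omega
  · rw [Sym2.eq_swap, c2_pw, phi_p, phi_w]
    have := hgge i
    have hy := hpw i (by rwa [Sym2.eq_swap] at hmem)
    unfold gI; rw [hy]; norm_num
  · rw [Sym2.eq_swap, c2_wv n a b i j hij, phi_w, phi_v, hij, PI_step]
    have := hgge i; omega
  · exfalso
    refine hst h2 ?_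
    have hu : u = tB n hn := by
      obtain ⟨u1, u2⟩ := u
      simp only at h4 h6
      exact Prod.ext (Fin.ext (by simpa [tB] using h4)) h6
    have hv : v = sB n hn := by
      obtain ⟨v1, v2⟩ := v
      simp only at h3 h5
      exact Prod.ext (Fin.ext (by simpa [sB] using h3)) h5
    rw [← hu, ← hv]
    rwa [Sym2.eq_swap] at hmem

/-- the key lower bound on the s-t distance in a spanner S -/
lemma wdist_st_lower (hn : 0 < n) (S : Finset (Sym2 (Vtx n)))
    (hS : ↑S ⊆ (HB n a b).edgeSet)
    (hst : 2 ≤ n → s(sB n hn, tB n hn) ∉ S)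
    (hpw : ∀ i, s(pB n i, wB n i) ∈ S → y i = false)
    (hcon : Nonempty ((SimpleGraph.fromEdgeSet (↑S : Set (Sym2 (Vtx n)))).Walk
      (sB n hn) (tB n hn))) :
    (3 * n - 1 : ℤ) + ∑ i, (if y i then (b i : ℤ) else 0) ≤
      (wdist (↑S) (c2B n a b) (sB n hn) (tB n hn) : ℤ) := by
  have hlow := wdist_ge_potential (↑S : Set (Sym2 (Vtx n))) (c2B n a b) (phiB n b y)
    (lipschitz n a b y hn S hS hst hpw) hcon
  have hphis : phiB n b y (sB n hn) = 0 := by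
    have : sB n hn = vB n ⟨0, hn⟩ := rfl
    rw [this, phi_v]
    simpa using PI_zero n b y
  have hphit : phiB n b y (tB n hn) =
      (3 * n - 1 : ℤ) + ∑ i, (if y i then (b i : ℤ) else 0) := by
    have htw : tB n hn = wB n ⟨n - 1, Nat.sub_lt hn one_pos⟩ := rfl
    rw [htw, phi_w]
    have hstep := PI_step n b y ⟨n - 1, Nat.sub_lt hn one_pos⟩
    have hval : ((⟨n - 1, Nat.sub_lt hn one_pos⟩ : Fin n) : ℕ) = n - 1 := rfl
    rw [hval] at hstep
    have hn1 : n - 1 + 1 = n := by omega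
    rw [hn1] at hstep
    have huniv := PI_univ n b y
    push_cast at huniv ⊢
    omega
  rw [hphis, hphit] at hlow
  omega

/-- lower bound for the pair (v_i', w_i) when its edge is missing (used for n = 1) -/
lemma wdist_pw_lower (hn1 : n = 1) (i : Fin n) (S : Finset (Sym2 (Vtx n)))
    (hS : ↑S ⊆ (HB n a b).edgeSet)
    (hpw : s(pB n i, wB n i) ∉ S)
    (hcon : Nonempty ((SimpleGraph.fromEdgeSet (↑S : Set (Sym2 (Vtx n)))).Walk
      (pB n i) (wB n i))) :
    (b i : ℤ) + 3 ≤ (wdist (↑S) (c2B n a b) (pB n i) (wB n i) : ℤ) := by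
  set φ : Vtx n → ℤ := fun u => if u.2 = 1 then 0 else if u.2 = 0 then 1 else (b i : ℤ) + 3
    with hφ
  have hlip : ∀ u v, (SimpleGraph.fromEdgeSet (↑S : Set (Sym2 (Vtx n)))).Adj u v →
      φ v - φ u ≤ c2B n a b s(u, v) := by
    intro u v hadj
    rw [SimpleGraph.fromEdgeSet_adj] at hadj
    obtain ⟨hmem, hne⟩ := hadj
    have he : s(u, v) ∈ EB n a b := by
      have := hS hmem
      rwa [edgeSet_HB] at this
    have hieq : ∀ j : Fin n, j = i := by
      intro j; apply Fin.ext; omega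
    rcases EB_cases n a b u v he with
      (⟨j, rfl, rfl⟩ | ⟨j, rfl, rfl⟩ | ⟨j, rfl, rfl⟩ | ⟨j, k, hjk, rfl, rfl⟩ | ⟨h2, _⟩) |
      (⟨j, rfl, rfl⟩ | ⟨j, rfl, rfl⟩ | ⟨j, rfl, rfl⟩ | ⟨j, k, hjk, rfl, rfl⟩ | ⟨h2, _⟩)
    · have hj := hieq j; subst hj
      rw [c2_vw]; simp [hφ, vB, wB]; omega
    · rw [c2_vp]; simp [hφ, vB, pB]
    · exact absurd (hieq j ▸ hmem) hpw
    · exfalso; have := j.isLt; have := k.isLt; omega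
    · omega
    · have hj := hieq j; subst hj
      rw [Sym2.eq_swap, c2_vw]; simp [hφ, vB, wB]; omega
    · rw [Sym2.eq_swap, c2_vp]; simp [hφ, vB, pB]
    · exfalso
      refine hpw ?_
      rw [Sym2.eq_swap] at hmem
      exact hieq j ▸ hmem
    · exfalso; have := j.isLt; have := k.isLt; omega
    · omega
  have hlow := wdist_ge_potential (↑S : Set (Sym2 (Vtx n))) (c2B n a b) φ hlip hcon
  have h1 : φ (pB n i) = 0 := by simp [hφ, pB]
  have h2 : φ (wB n i) = (b i : ℤ) + 3 := by simp [hφ, wB]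
  rw [h1, h2] at hlow
  omega

end SpecificB

section SpecificC
variable (n : ℕ) (a b : Fin n → ℕ) (x : Fin n → Bool)

def gN (b : Fin n → ℕ) (x : Fin n → Bool) (i : Fin n) : ℕ := if x i then b i + 2 else 2

lemma ne_vw (i : Fin n) : vB n i ≠ wB n i := by simp [vB, wB, Prod.ext_iff]
lemma ne_vp (i : Fin n) : vB n i ≠ pB n i := by simp [vB, pB, Prod.ext_iff]
lemma ne_pw (i : Fin n) : pB n i ≠ wB n i := by simp [pB, wB, Prod.ext_iff]
lemma ne_wv (i j : Fin n) : wB n i ≠ vB n j := by simp [vB, wB, Prod.ext_iff]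
lemma ne_st (hn : 0 < n) : sB n hn ≠ tB n hn := by simp [sB, tB, Prod.ext_iff]

lemma vw_mem_Sx (i : Fin n) : s(vB n i, wB n i) ∈ Sx n a b x :=
  mem_Sx_zero n a b x (vw_mem_EB n a b i) (c1_vw n a b i)
lemma vp_mem_Sx (i : Fin n) : s(vB n i, pB n i) ∈ Sx n a b x :=
  mem_Sx_zero n a b x (vp_mem_EB n a b i) (c1_vp n a b i)
lemma wv_mem_Sx (i j : Fin n) (h : (j : ℕ) = (i : ℕ) + 1) : s(wB n i, vB n j) ∈ Sx n a b x :=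
  mem_Sx_zero n a b x (wv_mem_EB n a b i j h) (c1_wv n a b i j h)

/-- adjacency in the `Sx` graph -/
lemma adj_Sx {u v : Vtx n} (h : s(u, v) ∈ Sx n a b x) (hne : u ≠ v) :
    (SimpleGraph.fromEdgeSet (↑(Sx n a b x) : Set (Sym2 (Vtx n)))).Adj u v := by
  rw [SimpleGraph.fromEdgeSet_adj]
  exact ⟨by exact_mod_cast h, hne⟩

/-- single-edge walk sum -/
lemma single_edge_sum {V : Type*} {G : SimpleGraph V} {u v : V} (h : G.Adj u v)
    (c2 : Sym2 V → ℕ) :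
    (((Walk.cons h Walk.nil).edges.map c2).sum) = c2 s(u, v) := by
  simp

lemma gadget_walk (i : Fin n) :
    ∃ q : (SimpleGraph.fromEdgeSet (↑(Sx n a b x) : Set (Sym2 (Vtx n)))).Walk
      (vB n i) (wB n i), (q.edges.map (c2B n a b)).sum ≤ gN n b x i := by
  by_cases hxi : x i
  · refine ⟨Walk.cons (adj_Sx n a b x (vw_mem_Sx n a b x i) (ne_vw n i)) Walk.nil, ?_⟩
    rw [single_edge_sum, c2_vw]
    simp [gN, hxi]
  · have hpw : s(pB n i, wB n i) ∈ Sx n a b x :=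
      pw_mem_Sx_of_false n a b x i (by simpa using hxi)
    refine ⟨Walk.cons (adj_Sx n a b x (vp_mem_Sx n a b x i) (ne_vp n i))
      (Walk.cons (adj_Sx n a b x hpw (ne_pw n i)) Walk.nil), ?_⟩
    simp only [Walk.edges_cons, List.map_cons, List.sum_cons, Walk.edges_nil,
      List.map_nil, List.sum_nil, c2_vp, c2_pw]
    simp [gN, hxi]

lemma spine_walk (hn : 0 < n) (k : ℕ) (hk : k < n) :
    ∃ q : (SimpleGraph.fromEdgeSet (↑(Sx n a b x) : Set (Sym2 (Vtx n)))).Walk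
      (vB n ⟨0, hn⟩) (wB n ⟨k, hk⟩),
      (q.edges.map (c2B n a b)).sum + 1 ≤
        ∑ j ∈ Finset.univ.filter (fun j : Fin n => (j : ℕ) ≤ k), (gN n b x j + 1) := by
  induction k with
  | zero =>
    obtain ⟨q, hq⟩ := gadget_walk n a b x ⟨0, hn⟩
    refine ⟨q, ?_⟩
    have : Finset.univ.filter (fun j : Fin n => (j : ℕ) ≤ 0) = {(⟨0, hn⟩ : Fin n)} := by
      ext j
      simp only [Finset.mem_filter, Finset.mem_univ, true_and, Finset.mem_singleton,
        Fin.ext_iff]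
      omega
    rw [this, Finset.sum_singleton]
    omega
  | succ m ih =>
    have hm : m < n := by omega
    obtain ⟨q, hq⟩ := ih hm
    obtain ⟨g, hg⟩ := gadget_walk n a b x ⟨m + 1, hk⟩
    have hconn : s(wB n ⟨m, hm⟩, vB n ⟨m + 1, hk⟩) ∈ Sx n a b x :=
      wv_mem_Sx n a b x ⟨m, hm⟩ ⟨m + 1, hk⟩ rfl
    refine ⟨q.append (Walk.cons (adj_Sx n a b x hconn (ne_wv n _ _)) g), ?_⟩
    rw [Walk.edges_append, List.map_append, List.sum_append]
    simp only [Walk.edges_cons, List.map_cons, List.sum_cons]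
    rw [c2_wv n a b ⟨m, hm⟩ ⟨m + 1, hk⟩ rfl]
    have hins : Finset.univ.filter (fun j : Fin n => (j : ℕ) ≤ m + 1) =
        insert (⟨m + 1, hk⟩ : Fin n)
          (Finset.univ.filter (fun j : Fin n => (j : ℕ) ≤ m)) := by
      ext j
      simp only [Finset.mem_filter, Finset.mem_univ, true_and, Finset.mem_insert,
        Fin.ext_iff]
      omega
    rw [hins, Finset.sum_insert (by simp)]
    omega

lemma filter_le_univ (hn : 0 < n) :
    Finset.univ.filter (fun j : Fin n => (j : ℕ) ≤ n - 1) = (Finset.univ : Finset (Fin n)) := by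
  apply Finset.filter_true_of_mem
  intro j _
  have := j.isLt
  omega

/-- the spine walk from s to t -/
lemma st_walk (hn : 0 < n) :
    ∃ q : (SimpleGraph.fromEdgeSet (↑(Sx n a b x) : Set (Sym2 (Vtx n)))).Walk
      (sB n hn) (tB n hn),
      (q.edges.map (c2B n a b)).sum + 1 ≤ ∑ j, (gN n b x j + 1) := by
  obtain ⟨q, hq⟩ := spine_walk n a b x hn (n - 1) (Nat.sub_lt hn one_pos)
  rw [filter_le_univ n hn] at hq
  exact ⟨q, hq⟩

/-- replacement bound for `Sx` -/
lemma rep_Sx (hn : 0 < n) (K : ℚ) (hK1 : 1 ≤ K)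
    (hKb : ∀ i, x i = true → (b i : ℚ) + 3 ≤ K)
    (hKst : 2 ≤ n → ((∑ j, (gN n b x j + 1) : ℕ) : ℚ) - 1 ≤ K) :
    ∀ u v, (SimpleGraph.fromEdgeSet (EB n a b)).Adj u v →
      ∃ q : (SimpleGraph.fromEdgeSet (↑(Sx n a b x) : Set (Sym2 (Vtx n)))).Walk u v,
        ((q.edges.map (c2B n a b)).sum : ℚ) ≤ K * c2B n a b s(u, v) := by
  have key : ∀ u v : Vtx n,
      ((∃ i, u = vB n i ∧ v = wB n i) ∨ (∃ i, u = vB n i ∧ v = pB n i) ∨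
       (∃ i, u = pB n i ∧ v = wB n i) ∨
       (∃ i j : Fin n, (j : ℕ) = (i : ℕ) + 1 ∧ u = wB n i ∧ v = vB n j) ∨
       (2 ≤ n ∧ (u.1 : ℕ) = 0 ∧ (v.1 : ℕ) = n - 1 ∧ u.2 = 0 ∧ v.2 = 2)) →
      ∃ q : (SimpleGraph.fromEdgeSet (↑(Sx n a b x) : Set (Sym2 (Vtx n)))).Walk u v,
        ((q.edges.map (c2B n a b)).sum : ℚ) ≤ K * c2B n a b s(u, v) := by
    rintro u v (⟨i, rfl, rfl⟩ | ⟨i, rfl, rfl⟩ | ⟨i, rfl, rfl⟩ | ⟨i, j, hij, rfl, rfl⟩ |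
      ⟨h2, h3, h4, h5, h6⟩)
    · refine ⟨Walk.cons (adj_Sx n a b x (vw_mem_Sx n a b x i) (ne_vw n i)) Walk.nil, ?_⟩
      rw [single_edge_sum, c2_vw]
      nlinarith [hK1, (by positivity : (0:ℚ) ≤ ((b i + 2 : ℕ) : ℚ))]
    · refine ⟨Walk.cons (adj_Sx n a b x (vp_mem_Sx n a b x i) (ne_vp n i)) Walk.nil, ?_⟩
      rw [single_edge_sum, c2_vp]
      simpa using hK1
    · by_cases hxi : x i
      · obtain ⟨g, hg⟩ := gadget_walk n a b x i
        refine ⟨(Walk.cons (adj_Sx n a b x (vp_mem_Sx n a b x i) (ne_vp n i)) Walk.nil).reverse.append g, ?_⟩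
        rw [Walk.edges_append, List.map_append, List.sum_append, Walk.edges_reverse,
          List.map_reverse, List.sum_reverse, single_edge_sum, c2_vp, c2_pw]
        have hb3 := hKb i hxi
        have : gN n b x i = b i + 2 := by simp [gN, hxi]
        rw [this] at hg
        rw [Nat.cast_add, Nat.cast_one]
        have hgq : ((g.edges.map (c2B n a b)).sum : ℚ) ≤ (b i : ℚ) + 2 := by
          exact_mod_cast hg
        linarith
      · have hpw : s(pB n i, wB n i) ∈ Sx n a b x :=
          pw_mem_Sx_of_false n a b x i (by simpa using hxi)
        refine ⟨Walk.cons (adj_Sx n a b x hpw (ne_pw n i)) Walk.nil, ?_⟩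
        rw [single_edge_sum, c2_pw]
        simpa using hK1
    · refine ⟨Walk.cons (adj_Sx n a b x (wv_mem_Sx n a b x i j hij) (ne_wv n i j)) Walk.nil, ?_⟩
      rw [single_edge_sum, c2_wv n a b i j hij]
      simpa using hK1
    · -- st edge
      have hu : u = sB n hn := by
        obtain ⟨u1, u2⟩ := u
        simp only at h3 h5
        exact Prod.ext (Fin.ext (by simpa [sB] using h3)) h5
      have hv : v = tB n hn := by
        obtain ⟨v1, v2⟩ := v
        simp only at h4 h6
        exact Prod.ext (Fin.ext (by simpa [tB] using h4)) h6
      subst hu; subst hv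
      obtain ⟨q, hq⟩ := st_walk n a b x hn
      refine ⟨q, ?_⟩
      rw [c2_st n a b hn h2]
      have h1 := hKst h2
      rw [Nat.cast_one, mul_one]
      have h3 : ((q.edges.map (c2B n a b)).sum : ℚ) + 1 ≤
          ((∑ j, (gN n b x j + 1) : ℕ) : ℚ) := by exact_mod_cast hq
      linarith
  intro u v hadj
  rw [SimpleGraph.fromEdgeSet_adj] at hadj
  obtain ⟨hmem, hne⟩ := hadj
  rcases EB_cases n a b u v hmem with hcase | hcase
  · exact key u v hcase
  · obtain ⟨q, hq⟩ := key v u hcase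
    refine ⟨q.reverse, ?_⟩
    rw [Walk.edges_reverse, List.map_reverse, List.sum_reverse, Sym2.eq_swap]
    exact hq

end SpecificC

section SpecificD
variable (n : ℕ) (a b : Fin n → ℕ) (x : Fin n → Bool)

lemma EB_weights : ∀ e ∈ EB n a b, c2B n a b e ≠ 0 := fun _ he => he

lemma wdist_edge_one {u v : Vtx n} (hmem : s(u, v) ∈ EB n a b)
    (hc2 : c2B n a b s(u, v) = 1) (hne : u ≠ v) :
    wdist (EB n a b) (c2B n a b) u v = 1 := by
  have hadj : (SimpleGraph.fromEdgeSet (EB n a b)).Adj u v := by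
    rw [SimpleGraph.fromEdgeSet_adj]; exact ⟨hmem, hne⟩
  have hle : wdist (EB n a b) (c2B n a b) u v ≤ 1 := by
    have := wdist_le_sum (EB n a b) (c2B n a b) (Walk.cons hadj Walk.nil)
    rwa [single_edge_sum, hc2] at this
  have hge := wdist_ge_one (EB n a b) (c2B n a b) (EB_weights n a b) hne
    ⟨Walk.cons hadj Walk.nil⟩
  omega

lemma wdist_S_ge_one (S : Finset (Sym2 (Vtx n))) (hS : ↑S ⊆ (HB n a b).edgeSet)
    {u v : Vtx n} (hne : u ≠ v)
    (hcon : Nonempty ((SimpleGraph.fromEdgeSet (↑S : Set (Sym2 (Vtx n)))).Walk u v)) :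
    1 ≤ wdist (↑S) (c2B n a b) u v := by
  refine wdist_ge_one _ _ (fun e he => ?_) hne hcon
  have : e ∈ EB n a b := by
    have := hS he
    rwa [edgeSet_HB] at this
  exact this

lemma f2_Sx_le (hn : 0 < n) (K : ℚ) (hK1 : 1 ≤ K)
    (hKb : ∀ i, x i = true → (b i : ℚ) + 3 ≤ K)
    (hKst : 2 ≤ n → ((∑ j, (gN n b x j + 1) : ℕ) : ℚ) - 1 ≤ K) :
    f2 (HB n a b).edgeSet (↑(Sx n a b x)) (c2B n a b) ≤ K := by
  rw [edgeSet_HB]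
  exact f2_le (EB n a b) (↑(Sx n a b x)) (c2B n a b) K (by linarith)
    (Sx_subset_EB n a b x) (rep_Sx n a b x hn K hK1 hKb hKst)

lemma sum_gN_cast : ((∑ j, (gN n b x j + 1) : ℕ) : ℚ) =
    3 * n + ∑ i, (if x i then (b i : ℚ) else 0) := by
  push_cast
  have h : ∀ i : Fin n, ((gN n b x i : ℚ) + 1) = (if x i then (b i : ℚ) else 0) + 3 := by
    intro i
    unfold gN
    split_ifs <;> push_cast <;> ring
  rw [Finset.sum_congr rfl fun i _ => h i, Finset.sum_add_distrib]
  simp [Finset.card_univ]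
  ring

lemma sum_split (c : Fin n → ℕ) (y : Fin n → Bool) :
    (∑ i ∈ Finset.univ.filter (fun i => y i = false), (c i : ℚ)) +
      (∑ i, if y i then (c i : ℚ) else 0) = ∑ i, (c i : ℚ) := by
  classical
  rw [Finset.sum_filter, ← Finset.sum_add_distrib]
  apply Finset.sum_congr rfl
  intro i _
  cases hy : y i <;> simp [hy]

end SpecificD

lemma cast_if_sum (n : ℕ) (b : Fin n → ℕ) (y : Fin n → Bool) :
    ((∑ i, if y i then (b i : ℤ) else 0 : ℤ) : ℚ) = ∑ i, if y i then (b i : ℚ) else 0 := by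
  rw [Int.cast_sum]
  apply Finset.sum_congr rfl
  intro i _
  split_ifs <;> simp

lemma Bsum_nonneg (n : ℕ) (b : Fin n → ℕ) (y : Fin n → Bool) :
    0 ≤ ∑ i, if y i then (b i : ℚ) else 0 :=
  Finset.sum_nonneg fun i _ => by cases hy : y i <;> simp [hy]

lemma Bsum_single (n : ℕ) (b : Fin n → ℕ) (y : Fin n → Bool) (i : Fin n) (hi : y i = true) :
    (b i : ℚ) ≤ ∑ j, if y j then (b j : ℚ) else 0 := by
  have h := Finset.single_le_sum (f := fun j => if y j then (b j : ℚ) else 0)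
    (fun j _ => by cases hy : y j <;> simp [hy]) (Finset.mem_univ i)
  simp only [hi, if_true] at h
  exact h

/-- If `x` is a Pareto-optimal solution of the BUCO instance, then `S_x`
is a Pareto-optimal spanner of the associated MSp instance: no spanner of `H` has a value
vector dominating `f(S_x)`. -/
theorem Sx_pareto_of_buco_pareto (n : ℕ) (hn : 0 < n) (a b : Fin n → ℕ)
    (ha : ∀ i, 0 < a i) (hb : ∀ i, 0 < b i) (x : Fin n → Bool)
    (hx : ¬ ∃ x' : Fin n → Bool, Dominates (bucoVal n a b x') (bucoVal n a b x)) :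
    ∀ S : Finset (Sym2 (Vtx n)), IsSpanner (HB n a b) (↑S) →
      ¬ Dominates (valueVec (HB n a b) (c1B n a b) (c2B n a b) S)
        (valueVec (HB n a b) (c1B n a b) (c2B n a b) (Sx n a b x)) := by
  classical
  intro S hS hdom
  obtain ⟨hS1, hS2⟩ := hS
  obtain ⟨hle, hnev⟩ := hdom
  rw [Prod.le_def] at hle
  simp only [valueVec] at hle hnev
  obtain ⟨hle1, hle2⟩ := hle
  rw [edgeSet_HB] at hle2 hnev
  set x' : Fin n → Bool := fun i => !(decide (s(pB n i, wB n i) ∈ S)) with hx'def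
  have hx'false : ∀ i, x' i = false ↔ s(pB n i, wB n i) ∈ S := by
    intro i; simp [hx'def]
  have hpwS : ∀ i, s(pB n i, wB n i) ∈ S → x' i = false := fun i h => (hx'false i).mpr h
  have hf1Sx : ((f1 (c1B n a b) (Sx n a b x) : ℤ) : ℚ) =
      ∑ i ∈ Finset.univ.filter (fun i => x i = false), (a i : ℚ) := by
    rw [f1_Sx n a b x ha]
    push_cast
    rfl
  have hfe : Finset.univ.filter (fun i => x' i = false) =
      Finset.univ.filter (fun i => s(pB n i, wB n i) ∈ S) :=
    Finset.filter_congr fun i _ => by simp [hx'false i]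
  have hf1S : (∑ i ∈ Finset.univ.filter (fun i => x' i = false), (a i : ℚ)) ≤
      ((f1 (c1B n a b) S : ℤ) : ℚ) := by
    rw [hfe]
    exact_mod_cast f1_ge n a b S
  have hreach : ∀ u v : Vtx n,
      Nonempty ((SimpleGraph.fromEdgeSet (↑S : Set (Sym2 (Vtx n)))).Walk u v) :=
    fun u v => hS2.preconnected u v
  have hstS : 2 ≤ n → s(sB n hn, tB n hn) ∉ S := by
    intro h2 hmem
    have h1 := f1_single n a b hmem
    rw [c1_st n a b hn h2] at h1
    have h4 : f1 (c1B n a b) S ≤ f1 (c1B n a b) (Sx n a b x) := by exact_mod_cast hle1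
    rw [f1_Sx n a b x ha] at h4
    have h3 : (∑ i ∈ Finset.univ.filter (fun i => x i = false), (a i : ℤ)) ≤
        ∑ i, (a i : ℤ) :=
      Finset.sum_le_sum_of_subset_of_nonneg (Finset.filter_subset _ _)
        (fun i _ _ => by positivity)
    have h5 : ((∑ i, a i : ℕ) : ℤ) = ∑ i, (a i : ℤ) := by push_cast; rfl
    omega
  have hlow := wdist_st_lower n a b x' hn S hS1 hstS hpwS (hreach _ _)
  rcases Nat.lt_or_ge n 2 with hn2 | h2
  · -- n = 1
    have hn1 : n = 1 := by omega
    subst hn1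
    set i0 : Fin 1 := ⟨0, hn⟩ with hi0
    have hall : ∀ i : Fin 1, i = i0 := fun i => Fin.ext (by omega)
    have hwpw : wdist (EB 1 a b) (c2B 1 a b) (pB 1 i0) (wB 1 i0) = 1 :=
      wdist_edge_one 1 a b (pw_mem_EB 1 a b i0) (c2_pw 1 a b i0) (ne_pw 1 i0)
    by_cases hx0 : x i0 = true
    · -- x = 1 : f(Sx) = (0, ≤ b+3)
      have hfilx : Finset.univ.filter (fun i : Fin 1 => x i = false) = ∅ := by
        ext i
        simp [Finset.mem_filter, hall i, hx0]
      rw [hfilx, Finset.sum_empty] at hf1Sx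
      have hnotmem : s(pB 1 i0, wB 1 i0) ∉ S := by
        intro hmem
        have hfil' : Finset.univ.filter (fun i : Fin 1 => x' i = false) = Finset.univ :=
          Finset.filter_true_of_mem fun i _ => (hx'false i).mpr (by rwa [hall i])
        rw [hfil'] at hf1S
        have hap : (0 : ℚ) < a i0 := by exact_mod_cast ha i0
        have hsum : ∑ i : Fin 1, (a i : ℚ) = a i0 := by
          rw [Fin.sum_univ_one, hall 0]
        rw [hsum] at hf1S
        linarith
      have hx'0 : x' i0 = true := by simp [hx'def, hnotmem]
      have hlowpw := wdist_pw_lower 1 a b rfl i0 S hS1 hnotmem (hreach _ _)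
      have hratio := f2_ge (EB 1 a b) (↑S : Set (Sym2 (Vtx 1))) (c2B 1 a b) (ne_pw 1 i0)
      rw [hwpw] at hratio
      norm_num at hratio
      have hlowq : (b i0 : ℚ) + 3 ≤
          (wdist (↑S) (c2B 1 a b) (pB 1 i0) (wB 1 i0) : ℚ) := by
        exact_mod_cast hlowpw
      have hupper : f2 (HB 1 a b).edgeSet (↑(Sx 1 a b x)) (c2B 1 a b) ≤ (b i0 : ℚ) + 3 :=
        f2_Sx_le 1 a b x hn _
          (by have : (0:ℚ) ≤ (b i0 : ℚ) := Nat.cast_nonneg _; linarith)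
          (fun i hi => le_of_eq (by rw [hall i]))
          (fun h2 => absurd h2 (by omega))
      rw [edgeSet_HB] at hupper
      -- f1 S = 0
      have hf1nn : (0 : ℚ) ≤ ∑ i ∈ Finset.univ.filter
          (fun i : Fin 1 => x' i = false), (a i : ℚ) :=
        Finset.sum_nonneg fun i _ => Nat.cast_nonneg _
      refine hnev ?_
      rw [Prod.mk.injEq]
      constructor
      · rw [hf1Sx]
        linarith
      · linarith
    · -- x = 0
      have hx0' : x i0 = false := by simpa using hx0
      have hupper1 : f2 (HB 1 a b).edgeSet (↑(Sx 1 a b x)) (c2B 1 a b) ≤ 1 :=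
        f2_Sx_le 1 a b x hn 1 le_rfl
          (fun i hi => absurd ((hall i) ▸ hi) (by simp [hx0']))
          (fun h2 => absurd h2 (by omega))
      rw [edgeSet_HB] at hupper1
      by_cases hmem : s(pB 1 i0, wB 1 i0) ∈ S
      · -- e^a in S : everything equal
        have hfilx : Finset.univ.filter (fun i : Fin 1 => x i = false) = Finset.univ :=
          Finset.filter_true_of_mem fun i _ => by rw [hall i]; exact hx0'
        rw [hfilx] at hf1Sx
        have hfil' : Finset.univ.filter (fun i : Fin 1 => x' i = false) = Finset.univ :=
          Finset.filter_true_of_mem fun i _ => (hx'false i).mpr (by rwa [hall i])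
        rw [hfil'] at hf1S
        have hwvp : wdist (EB 1 a b) (c2B 1 a b) (vB 1 i0) (pB 1 i0) = 1 :=
          wdist_edge_one 1 a b (vp_mem_EB 1 a b i0) (c2_vp 1 a b i0) (ne_vp 1 i0)
        have hnum : 1 ≤ wdist (↑S) (c2B 1 a b) (vB 1 i0) (pB 1 i0) :=
          wdist_S_ge_one 1 a b S hS1 (ne_vp 1 i0) (hreach _ _)
        have hratio := f2_ge (EB 1 a b) (↑S : Set (Sym2 (Vtx 1))) (c2B 1 a b) (ne_vp 1 i0)
        rw [hwvp] at hratio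
        norm_num at hratio
        have hnumq : (1 : ℚ) ≤ (wdist (↑S) (c2B 1 a b) (vB 1 i0) (pB 1 i0) : ℚ) := by
          exact_mod_cast hnum
        refine hnev ?_
        rw [Prod.mk.injEq]
        constructor
        · rw [hf1Sx]
          linarith
        · linarith
      · -- e^a not in S : f2 S too large
        have hlowpw := wdist_pw_lower 1 a b rfl i0 S hS1 hmem (hreach _ _)
        have hratio := f2_ge (EB 1 a b) (↑S : Set (Sym2 (Vtx 1))) (c2B 1 a b) (ne_pw 1 i0)
        rw [hwpw] at hratio
        norm_num at hratio
        have hlowq : (b i0 : ℚ) + 3 ≤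
            (wdist (↑S) (c2B 1 a b) (pB 1 i0) (wB 1 i0) : ℚ) := by
          exact_mod_cast hlowpw
        have hbq : (1 : ℚ) ≤ (b i0 : ℚ) := by exact_mod_cast hb i0
        linarith
  · -- n ≥ 2
    have hnq : (2 : ℚ) ≤ (n : ℚ) := by exact_mod_cast h2
    have hBxnn := Bsum_nonneg n b x
    have hBx'nn := Bsum_nonneg n b x'
    have hupper : f2 (HB n a b).edgeSet (↑(Sx n a b x)) (c2B n a b) ≤
        3 * (n : ℚ) - 1 + ∑ i, (if x i then (b i : ℚ) else 0) :=
      f2_Sx_le n a b x hn _ (by linarith)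
        (fun i hi => by have := Bsum_single n b x i hi; linarith)
        (fun _ => by rw [sum_gN_cast]; linarith)
    rw [edgeSet_HB] at hupper
    have hwE : wdist (EB n a b) (c2B n a b) (sB n hn) (tB n hn) = 1 :=
      wdist_edge_one n a b (st_mem_EB n a b hn h2) (c2_st n a b hn h2) (ne_st n hn)
    have hratio := f2_ge (EB n a b) (↑S : Set (Sym2 (Vtx n))) (c2B n a b) (ne_st n hn)
    rw [hwE] at hratio
    norm_num at hratio
    have hlowq : 3 * (n : ℚ) - 1 + ∑ i, (if x' i then (b i : ℚ) else 0) ≤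
        (wdist (↑S) (c2B n a b) (sB n hn) (tB n hn) : ℚ) := by
      have hq : ((3 * (n : ℤ) - 1 + ∑ i, (if x' i then (b i : ℤ) else 0) : ℤ) : ℚ) ≤
          ((wdist (↑S) (c2B n a b) (sB n hn) (tB n hn) : ℤ) : ℚ) :=
        Int.cast_le.mpr hlow
      rw [Int.cast_add, cast_if_sum n b x'] at hq
      push_cast at hq
      linarith
    have hor : ((f1 (c1B n a b) S : ℤ) : ℚ) < ((f1 (c1B n a b) (Sx n a b x) : ℤ) : ℚ) ∨
        f2 (EB n a b) (↑S) (c2B n a b) < f2 (EB n a b) (↑(Sx n a b x)) (c2B n a b) := by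
      by_contra hcon
      push_neg at hcon
      obtain ⟨hc1, hc2⟩ := hcon
      exact hnev (by
        rw [Prod.mk.injEq]
        exact ⟨le_antisymm hle1 hc1, le_antisymm hle2 hc2⟩)
    have hsplx := sum_split n a x
    have hsplx' := sum_split n a x'
    apply hx
    refine ⟨x', ⟨?_, ?_⟩⟩
    · -- le
      simp only [bucoVal, Prod.mk_le_mk]
      constructor
      · rw [hf1Sx] at hle1
        linarith
      · linarith
    · -- ne
      intro heq
      simp only [bucoVal, Prod.mk.injEq, neg_inj] at heq
      obtain ⟨e1, e2⟩ := heq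
      rcases hor with hlt | hlt
      · rw [hf1Sx] at hlt
        linarith
      · linarith


end MSpPaper
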